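/- (Colorful Helly for convexity spaces) Let r ≥ 3 be an integer, set k = r − 1, n = k^{⌈log₂ r⌉}, and m = S(n, k), the Stirling number of the second kind counting partitions of an n-element set into k nonempty parts. Let (X, 𝒞) be a convexity space with Radon number at most r, and let F₁, …, F_m be finite families of convex sets of 𝒞 such that S₁ ∩ S₂ ∩ ⋯ ∩ S_m ≠ ∅ for every choice of S_i ∈ F_i (i = 1, …, m). Then there exists an index i ∈ {1, …, m} such that ⋂_{S ∈ F_i} S ≠ ∅. -/

import Mathlib

open scoped Classical

/-- A convexity space on a ground set `X`: a finite family of "convex" subsets of `X`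
containing `∅` and `X` and closed under pairwise intersections. -/
structure ConvexitySpace (X : Type*) where
  sets : Finset (Set X)
  empty_mem : ∅ ∈ sets
  univ_mem : Set.univ ∈ sets
  inter_mem : ∀ A ∈ sets, ∀ B ∈ sets, A ∩ B ∈ sets

namespace ConvexitySpace

variable {X : Type*}

/-- The convex hull of `Y`: the intersection of all convex sets containing `Y`. -/
def hull (CS : ConvexitySpace X) (Y : Set X) : Set X :=
  ⋂₀ {S : Set X | S ∈ CS.sets ∧ Y ⊆ S}

/-- The convexity space has Radon number at most `r`: every set of at least `r` points
can be partitioned into two parts whose convex hulls intersect. -/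
def RadonLE (CS : ConvexitySpace X) (r : ℕ) : Prop :=
  ∀ P : Finset X, r ≤ P.card →
    ∃ P₁ P₂ : Finset X, P₁ ∪ P₂ = P ∧ Disjoint P₁ P₂ ∧
      (CS.hull ↑P₁ ∩ CS.hull ↑P₂).Nonempty

end ConvexitySpace

/-- Stirling numbers of the second kind: `stirling2 n k` is the number of partitions of an
`n`-element set into `k` nonempty unlabeled parts. -/
def stirling2 : ℕ → ℕ → ℕ
  | 0, 0 => 1
  | 0, _ + 1 => 0
  | _ + 1, 0 => 0
  | n + 1, k + 1 => (k + 1) * stirling2 n (k + 1) + stirling2 n k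

namespace CHAux

open ConvexitySpace

variable {X : Type*} (CS : ConvexitySpace X)

theorem subset_hull {Y : Set X} : Y ⊆ CS.hull Y := by
  intro y hy
  intro S hS
  exact hS.2 hy

theorem hull_min {Y A : Set X} (hA : A ∈ CS.sets) (hYA : Y ⊆ A) : CS.hull Y ⊆ A :=
  Set.sInter_subset_of_mem ⟨hA, hYA⟩

theorem hull_mono {Y Z : Set X} (h : Y ⊆ Z) : CS.hull Y ⊆ CS.hull Z := by
  intro x hx S hS
  exact hx S ⟨hS.1, h.trans hS.2⟩

theorem hull_empty : CS.hull (∅ : Set X) = ∅ := by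
  apply Set.eq_empty_of_subset_empty
  exact hull_min CS CS.empty_mem (subset_refl _)

theorem sInter_mem (T : Finset (Set X)) (hT : ∀ S ∈ T, S ∈ CS.sets) :
    ⋂₀ (T : Set (Set X)) ∈ CS.sets := by
  classical
  induction T using Finset.induction_on with
  | empty => simpa using CS.univ_mem
  | insert A T' hni ih =>
    rw [Finset.coe_insert, Set.sInter_insert]
    exact CS.inter_mem _ (hT A (Finset.mem_insert_self _ _)) _
      (ih fun S hS => hT S (Finset.mem_insert_of_mem hS))

theorem hull_mem (Y : Set X) : CS.hull Y ∈ CS.sets := by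
  classical
  have : CS.hull Y = ⋂₀ ((CS.sets.filter (fun S => Y ⊆ S) : Finset (Set X)) : Set (Set X)) := by
    unfold ConvexitySpace.hull
    congr 1
    ext S
    simp [Finset.mem_filter]
  rw [this]
  exact sInter_mem CS _ (fun S hS => (Finset.mem_filter.1 hS).1)

theorem hull_le_hull {Y Z : Set X} (h : ∀ v ∈ Y, v ∈ CS.hull Z) : CS.hull Y ⊆ CS.hull Z :=
  hull_min CS (hull_mem CS Z) h

end CHAux

namespace CHAux

variable {X : Type*} (CS : ConvexitySpace X)

/-- Levi's lemma: Radon number ≤ k+1 implies Helly number ≤ k. -/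
theorem helly (hX : Nonempty X) (k : ℕ) (hk : 1 ≤ k) (hCS : CS.RadonLE (k + 1))
    (G : Finset (Set X)) (hG : ∀ S ∈ G, S ∈ CS.sets)
    (hne : ⋂₀ (G : Set (Set X)) = ∅) :
    ∃ K : Fin k → Set X, (∀ l, K l ∈ G) ∧ (⋂ l, K l) = ∅ := by
  classical
  induction G using Finset.strongInduction with
  | _ G ih =>
  -- G is nonempty
  rcases G.eq_empty_or_nonempty with rfl | ⟨S₀, hS₀⟩
  · exfalso
    rw [Finset.coe_empty, Set.sInter_empty] at hne
    exact hX.elim fun x => (hne ▸ Set.mem_univ x : x ∈ (∅ : Set X))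
  by_cases hcard : G.card ≤ k
  · -- small case : enumerate G into a k-tuple
    refine ⟨fun l => G.toList.getD l S₀, fun l => ?_, ?_⟩
    · show G.toList.getD (l : ℕ) S₀ ∈ G
      by_cases hl : (l : ℕ) < G.toList.length
      · rw [List.getD_eq_getElem _ _ hl]
        exact Finset.mem_toList.1 (List.getElem_mem _)
      · rw [List.getD_eq_default _ _ (not_lt.1 hl)]
        exact hS₀
    · apply Set.eq_empty_of_subset_empty
      rw [← hne]
      intro x hx
      rw [Set.mem_iInter] at hx
      intro S hS
      rcases Finset.mem_toList.2 hS with hSl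
      rcases List.mem_iff_getElem.1 hSl with ⟨i, hi, rfl⟩
      have hik : i < k := lt_of_lt_of_le (by simpa [Finset.length_toList] using hi) hcard
      have := hx ⟨i, hik⟩
      rwa [List.getD_eq_getElem _ _ (by simpa using hi)] at this
  · -- big case
    push_neg at hcard
    -- either some erased family has empty intersection, or derive a contradiction
    by_cases hstep : ∃ S ∈ G, ⋂₀ ((G.erase S : Finset (Set X)) : Set (Set X)) = ∅
    · rcases hstep with ⟨S, hS, hSe⟩
      rcases ih (G.erase S) (Finset.erase_ssubset hS)
        (fun T hT => hG T (Finset.mem_of_mem_erase hT)) hSe with ⟨K, hK1, hK2⟩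
      exact ⟨K, fun l => Finset.mem_of_mem_erase (hK1 l), hK2⟩
    · exfalso
      push_neg at hstep
      -- pick a point in each erased intersection
      have hpt : ∀ S : {S // S ∈ G}, ∃ x : X,
          x ∈ ⋂₀ ((G.erase S.1 : Finset (Set X)) : Set (Set X)) := by
        intro S
        exact hstep S.1 S.2
      choose p hp using hpt
      by_cases hinj : Function.Injective p
      · -- Radon on the image
        set P : Finset X := Finset.univ.image p with hP
        have hPcard : k + 1 ≤ P.card := by
          rw [hP, Finset.card_image_of_injective _ hinj]
          simpa [Finset.card_univ] using hcard
        rcases hCS P hPcard with ⟨P₁, P₂, hun, hdis, w, hw₁, hw₂⟩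
        have hwG : w ∈ ⋂₀ (G : Set (Set X)) := by
          intro S hS
          have hSmem : S ∈ CS.sets := hG S hS
          -- p T ∈ S whenever T ≠ S
          have hother : ∀ T : {S // S ∈ G}, T.1 ≠ S → p T ∈ S := by
            intro T hT
            exact hp T S (Finset.mem_erase.2 ⟨Ne.symm hT, hS⟩)
          have hsplit : (↑P₁ : Set X) ⊆ S ∨ (↑P₂ : Set X) ⊆ S := by
            by_cases hc : p ⟨S, hS⟩ ∈ P₁
            · right
              intro q hq
              have hqP : q ∈ P := by
                rw [← hun]; exact Finset.mem_union_right _ hq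
              rcases Finset.mem_image.1 (hP ▸ hqP) with ⟨T, _, rfl⟩
              apply hother
              intro hTS
              have : p T ∈ P₁ := by
                have : T = ⟨S, hS⟩ := Subtype.ext hTS
                rw [this]; exact hc
              exact (Finset.disjoint_left.1 hdis) this hq
            · left
              intro q hq
              have hqP : q ∈ P := by
                rw [← hun]; exact Finset.mem_union_left _ hq
              rcases Finset.mem_image.1 (hP ▸ hqP) with ⟨T, _, rfl⟩
              apply hother
              intro hTS
              have : T = ⟨S, hS⟩ := Subtype.ext hTS
              rw [this] at hq
              exact hc hq
          rcases hsplit with h | h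
          · exact hull_min CS hSmem h hw₁
          · exact hull_min CS hSmem h hw₂
        rw [hne] at hwG
        exact hwG
      · -- two coinciding points give a point in the full intersection
        rw [Function.not_injective_iff] at hinj
        rcases hinj with ⟨T, T', hTT', hne'⟩
        have : p T ∈ ⋂₀ (G : Set (Set X)) := by
          intro S hS
          by_cases hST : S = T.1
          · have := hp T' S (Finset.mem_erase.2 ⟨?_, hS⟩)
            · rw [← hTT'] at this; exact this
            · intro h; apply hne'; apply Subtype.ext; rw [hST] at h; exact h
          · exact hp T S (Finset.mem_erase.2 ⟨fun h => hST h, hS⟩)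
        rw [hne] at this
        exact this

end CHAux

namespace CHAux

variable {X : Type*} (CS : ConvexitySpace X)

/-- Responses: the side of a Radon split not containing participant `0`,
recorded as a nonempty subset of the remaining `k` participants. -/
abbrev Rk (k : ℕ) := {S : Finset (Fin k) // S.Nonempty}

/-- Internal nodes of the complete `(k+1)`-ary tree of depth `t`. -/
def Nd (k t : ℕ) := Σ j : Fin t, (Fin j.val → Fin (k + 1))

instance (k t : ℕ) : Fintype (Nd k t) := by unfold Nd; infer_instance
instance (k t : ℕ) : DecidableEq (Nd k t) := by unfold Nd; infer_instance

/-- A full history of responses on a depth-`t` tree. -/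
abbrev Hd (k t : ℕ) := Nd k t → Rk k

def rootN (k t : ℕ) : Nd k (t + 1) := ⟨⟨0, Nat.succ_pos t⟩, finZeroElim⟩

def embN (k t : ℕ) (i : Fin (k + 1)) (n : Nd k t) : Nd k (t + 1) :=
  ⟨⟨n.1.val + 1, Nat.succ_lt_succ n.1.isLt⟩, Fin.cons i n.2⟩

def resH (k t : ℕ) (h : Hd k (t + 1)) (i : Fin (k + 1)) : Hd k t := fun n => h (embN k t i n)

def glH (k t : ℕ) (s : Rk k) (hs : Fin (k + 1) → Hd k t) : Hd k (t + 1) := fun n =>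
  match n with
  | ⟨⟨0, _⟩, _⟩ => s
  | ⟨⟨j + 1, hj⟩, p⟩ => hs (p 0) ⟨⟨j, Nat.lt_of_succ_lt_succ hj⟩, fun q => p q.succ⟩

theorem glH_root (k t : ℕ) (s : Rk k) (hs : Fin (k + 1) → Hd k t) :
    glH k t s hs (rootN k t) = s := rfl

theorem resH_glH (k t : ℕ) (s : Rk k) (hs : Fin (k + 1) → Hd k t) (i : Fin (k + 1)) :
    resH k t (glH k t s hs) i = hs i := by
  funext n
  rcases n with ⟨⟨j, hj⟩, p⟩
  show glH k t s hs ⟨⟨j + 1, _⟩, Fin.cons i p⟩ = _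
  unfold glH
  simp [Fin.cons_zero, Fin.cons_succ]

/-- The participants on the side of the split given by `s` (excluding participant 0). -/
def sideF (k : ℕ) (s : Rk k) : Finset (Fin (k + 1)) :=
  s.1.map ⟨Fin.succ, Fin.succ_injective k⟩

def sideOf (k : ℕ) (s : Rk k) (b : Bool) : Finset (Fin (k + 1)) :=
  if b then (sideF k s)ᶜ else sideF k s

/-- The (purely combinatorial) selector sets: given a history of responses,
`selComb k t h b` is the set of leaves selected by the bit-vector `b`. -/
def selComb (k : ℕ) : (t : ℕ) → Hd k t → (Fin t → Bool) → Finset (Fin t → Fin (k + 1))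
  | 0, _, _ => {finZeroElim}
  | (t + 1), h, b =>
      (sideOf k (h (rootN k t)) (b 0)).biUnion
        (fun i => (selComb k t (resH k t h i) (fun j => b j.succ)).image (fun g => Fin.cons i g))

theorem mem_selComb_succ (k t : ℕ) (h : Hd k (t + 1)) (b : Fin (t + 1) → Bool)
    (f : Fin (t + 1) → Fin (k + 1)) :
    f ∈ selComb k (t + 1) h b ↔
      f 0 ∈ sideOf k (h (rootN k t)) (b 0) ∧
        Fin.tail f ∈ selComb k t (resH k t h (f 0)) (fun j => b j.succ) := by
  constructor
  · intro hf
    rcases Finset.mem_biUnion.1 hf with ⟨i, hi, hf'⟩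
    rcases Finset.mem_image.1 hf' with ⟨g, hg, rfl⟩
    refine ⟨by simpa [Fin.cons_zero] using hi, ?_⟩
    simpa [Fin.cons_zero, Fin.tail_cons] using hg
  · rintro ⟨h1, h2⟩
    apply Finset.mem_biUnion.2
    refine ⟨f 0, h1, ?_⟩
    apply Finset.mem_image.2
    exact ⟨Fin.tail f, h2, Fin.cons_self_tail f⟩

theorem selComb_disjoint (k : ℕ) : ∀ (t : ℕ) (h : Hd k t) (b b' : Fin t → Bool), b ≠ b' →
    ∀ f, f ∈ selComb k t h b → f ∈ selComb k t h b' → False := by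
  intro t
  induction t with
  | zero =>
    intro h b b' hbb _ _ _
    exact hbb (funext fun i => i.elim0)
  | succ t ih =>
    intro h b b' hbb f hf hf'
    rw [mem_selComb_succ] at hf hf'
    by_cases h0 : b 0 = b' 0
    · have htail : (fun j : Fin t => b j.succ) ≠ (fun j => b' j.succ) := by
        intro hcon
        apply hbb
        funext j
        rcases Fin.eq_zero_or_eq_succ j with rfl | ⟨j', rfl⟩
        · exact h0
        · exact congrFun hcon j'
      exact ih (resH k t h (f 0)) _ _ htail (Fin.tail f) hf.2 hf'.2
    · -- f 0 lies in both a side and its complement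
      have h1 := hf.1
      have h2 := hf'.1
      cases hb : b 0 <;> cases hb' : b' 0
      · exact h0 (hb.trans hb'.symm)
      · rw [hb] at h1; rw [hb'] at h2
        simp only [sideOf, if_false, if_true, Bool.false_eq_true, ite_false, ite_true] at h1 h2
        exact absurd h1 (Finset.mem_compl.1 h2)
      · rw [hb] at h1; rw [hb'] at h2
        simp only [sideOf, if_false, if_true, Bool.false_eq_true, ite_false, ite_true] at h1 h2
        exact absurd h2 (Finset.mem_compl.1 h1)
      · exact h0 (hb.trans hb'.symm)

end CHAux

namespace CHAux

variable {X : Type*} (CS : ConvexitySpace X)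

/-- One Radon step: given `k+1` points, there is a canonical split (recorded as a
nonempty subset of `Fin k`, the side not containing point 0) and a witness point in the
hulls of the two sides. -/
theorem combine {k : ℕ} (hCS : CS.RadonLE (k + 1)) (z : Fin (k + 1) → X) :
    ∃ (s : Rk k) (w : X),
      w ∈ CS.hull (z '' ↑(sideF k s)) ∧ w ∈ CS.hull (z '' ↑((sideF k s)ᶜ)) := by
  classical
  by_cases hinj : Function.Injective z
  · -- Radon
    set P : Finset X := Finset.univ.image z with hP
    have hPcard : k + 1 ≤ P.card := by
      rw [hP, Finset.card_image_of_injective _ hinj]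
      simp
    rcases hCS P hPcard with ⟨P₁, P₂, hun, hdis, w, hw₁, hw₂⟩
    have hmemP : ∀ i, z i ∈ P₁ ∨ z i ∈ P₂ := by
      intro i
      have : z i ∈ P := by rw [hP]; exact Finset.mem_image_of_mem z (Finset.mem_univ i)
      rw [← hun] at this
      exact Finset.mem_union.1 this
    have hne₁ : P₁.Nonempty := by
      rcases P₁.eq_empty_or_nonempty with rfl | h
      · exfalso
        rw [Finset.coe_empty, hull_empty] at hw₁
        exact hw₁
      · exact h
    have hne₂ : P₂.Nonempty := by
      rcases P₂.eq_empty_or_nonempty with rfl | h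
      · exfalso
        rw [Finset.coe_empty, hull_empty] at hw₂
        exact hw₂
      · exact h
    have hP₁sub : (P₁ : Set X) ⊆ Set.range z := by
      intro p hp
      have : p ∈ P := by rw [← hun]; exact Finset.mem_union_left _ hp
      rcases Finset.mem_image.1 (hP ▸ this) with ⟨i, _, rfl⟩
      exact Set.mem_range_self i
    have hP₂sub : (P₂ : Set X) ⊆ Set.range z := by
      intro p hp
      have : p ∈ P := by rw [← hun]; exact Finset.mem_union_right _ hp
      rcases Finset.mem_image.1 (hP ▸ this) with ⟨i, _, rfl⟩
      exact Set.mem_range_self i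
    -- choose the side not containing z 0
    by_cases hz0 : z 0 ∈ P₁
    · -- side = indices with z in P₂
      have hz0' : z 0 ∉ P₂ := fun h => (Finset.disjoint_left.1 hdis) hz0 h
      have hsne : ∃ a : Fin k, z a.succ ∈ P₂ := by
        rcases hne₂ with ⟨p, hp⟩
        rcases hP₂sub hp with ⟨i, rfl⟩
        rcases Fin.eq_zero_or_eq_succ i with rfl | ⟨a, rfl⟩
        · exact absurd hp hz0'
        · exact ⟨a, hp⟩
      have hsne' : (Finset.univ.filter (fun a : Fin k => z a.succ ∈ P₂)).Nonempty := by
        rcases hsne with ⟨a, ha⟩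
        exact ⟨a, Finset.mem_filter.2 ⟨Finset.mem_univ a, ha⟩⟩
      refine ⟨⟨Finset.univ.filter (fun a : Fin k => z a.succ ∈ P₂), hsne'⟩, w, ?_, ?_⟩
      · -- z '' sideF = P₂
        have himg : z '' ↑(sideF k ⟨Finset.univ.filter (fun a : Fin k => z a.succ ∈ P₂), hsne'⟩) = ↑P₂ := by
          ext p
          constructor
          · rintro ⟨i, hi, rfl⟩
            rcases Finset.mem_map.1 hi with ⟨a, ha, rfl⟩
            exact (Finset.mem_filter.1 ha).2
          · intro hp
            rcases hP₂sub hp with ⟨i, rfl⟩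
            rcases Fin.eq_zero_or_eq_succ i with rfl | ⟨a, rfl⟩
            · exact absurd hp hz0'
            · exact ⟨a.succ, Finset.mem_coe.2 (Finset.mem_map.2
                ⟨a, Finset.mem_filter.2 ⟨Finset.mem_univ a, hp⟩, rfl⟩), rfl⟩
        rw [himg]
        exact hw₂
      · -- z '' (sideF)ᶜ = P₁
        have himg : z '' ↑((sideF k ⟨Finset.univ.filter (fun a : Fin k => z a.succ ∈ P₂), hsne'⟩)ᶜ) = ↑P₁ := by
          ext p
          constructor
          · rintro ⟨i, hi, rfl⟩
            have hi' := Finset.mem_compl.1 (Finset.mem_coe.1 hi)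
            rcases hmemP i with h | h
            · exact h
            · exfalso
              apply hi'
              rcases Fin.eq_zero_or_eq_succ i with rfl | ⟨a, rfl⟩
              · exact absurd h hz0'
              · exact Finset.mem_map.2 ⟨a, Finset.mem_filter.2 ⟨Finset.mem_univ a, h⟩, rfl⟩
          · intro hp
            rcases hP₁sub hp with ⟨i, rfl⟩
            refine ⟨i, Finset.mem_coe.2 (Finset.mem_compl.2 ?_), rfl⟩
            intro hmem
            rcases Finset.mem_map.1 hmem with ⟨a, ha, rfl⟩
            have := (Finset.mem_filter.1 ha).2
            exact (Finset.disjoint_left.1 hdis) hp this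
        rw [himg]
        exact hw₁
    · -- z 0 ∈ P₂; side = indices with z in P₁
      have hz0'' : z 0 ∈ P₂ := (hmemP 0).resolve_left hz0
      have hsne : ∃ a : Fin k, z a.succ ∈ P₁ := by
        rcases hne₁ with ⟨p, hp⟩
        rcases hP₁sub hp with ⟨i, rfl⟩
        rcases Fin.eq_zero_or_eq_succ i with rfl | ⟨a, rfl⟩
        · exact absurd hp hz0
        · exact ⟨a, hp⟩
      have hsne' : (Finset.univ.filter (fun a : Fin k => z a.succ ∈ P₁)).Nonempty := by
        rcases hsne with ⟨a, ha⟩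
        exact ⟨a, Finset.mem_filter.2 ⟨Finset.mem_univ a, ha⟩⟩
      refine ⟨⟨Finset.univ.filter (fun a : Fin k => z a.succ ∈ P₁), hsne'⟩, w, ?_, ?_⟩
      · have himg : z '' ↑(sideF k ⟨Finset.univ.filter (fun a : Fin k => z a.succ ∈ P₁), hsne'⟩) = ↑P₁ := by
          ext p
          constructor
          · rintro ⟨i, hi, rfl⟩
            rcases Finset.mem_map.1 hi with ⟨a, ha, rfl⟩
            exact (Finset.mem_filter.1 ha).2
          · intro hp
            rcases hP₁sub hp with ⟨i, rfl⟩
            rcases Fin.eq_zero_or_eq_succ i with rfl | ⟨a, rfl⟩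
            · exact absurd hp hz0
            · exact ⟨a.succ, Finset.mem_coe.2 (Finset.mem_map.2
                ⟨a, Finset.mem_filter.2 ⟨Finset.mem_univ a, hp⟩, rfl⟩), rfl⟩
        rw [himg]
        exact hw₁
      · have himg : z '' ↑((sideF k ⟨Finset.univ.filter (fun a : Fin k => z a.succ ∈ P₁), hsne'⟩)ᶜ) = ↑P₂ := by
          ext p
          constructor
          · rintro ⟨i, hi, rfl⟩
            have hi' := Finset.mem_compl.1 (Finset.mem_coe.1 hi)
            rcases hmemP i with h | h
            · exfalso
              apply hi'
              rcases Fin.eq_zero_or_eq_succ i with rfl | ⟨a, rfl⟩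
              · exact absurd h hz0
              · exact Finset.mem_map.2 ⟨a, Finset.mem_filter.2 ⟨Finset.mem_univ a, h⟩, rfl⟩
            · exact h
          · intro hp
            rcases hP₂sub hp with ⟨i, rfl⟩
            refine ⟨i, Finset.mem_coe.2 (Finset.mem_compl.2 ?_), rfl⟩
            intro hmem
            rcases Finset.mem_map.1 hmem with ⟨a, ha, rfl⟩
            have := (Finset.mem_filter.1 ha).2
            exact (Finset.disjoint_left.1 hdis) this hp
        rw [himg]
        exact hw₂
  · -- degenerate : two of the points coincide
    rw [Function.not_injective_iff] at hinj
    rcases hinj with ⟨i, j, heq, hij⟩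
    -- pick the pair so that the first index is nonzero
    obtain ⟨a, b, hab, hzab, ha0⟩ : ∃ a b : Fin (k + 1), a ≠ b ∧ z a = z b ∧ a ≠ 0 := by
      rcases eq_or_ne i 0 with rfl | hi0
      · exact ⟨j, 0, Ne.symm hij, heq.symm, Ne.symm hij⟩
      · exact ⟨i, j, hij, heq, hi0⟩
    refine ⟨⟨{a.pred ha0}, Finset.singleton_nonempty _⟩, z a, ?_, ?_⟩
    · apply subset_hull CS
      refine ⟨a, ?_, rfl⟩
      apply Finset.mem_coe.2
      apply Finset.mem_map.2
      exact ⟨a.pred ha0, Finset.mem_singleton_self _, Fin.succ_pred a ha0⟩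
    · apply subset_hull CS
      refine ⟨b, ?_, hzab.symm⟩
      apply Finset.mem_coe.2
      apply Finset.mem_compl.2
      intro hmem
      rcases Finset.mem_map.1 hmem with ⟨c, hc, hcb⟩
      have hc' : c = a.pred ha0 := Finset.mem_singleton.1 hc
      subst hc'
      simp only [Function.Embedding.coeFn_mk, Fin.succ_pred] at hcb
      exact hab hcb

end CHAux

namespace CHAux

variable {X : Type*} (CS : ConvexitySpace X)

/-- The main recursive construction: for any assignment of points to the leaves of the
complete `(k+1)`-ary tree of depth `t`, there is a history of responses and a point lying
in the hulls of all the selector sets. -/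
theorem build {k : ℕ} (hCS : CS.RadonLE (k + 1)) :
    ∀ (t : ℕ) (x : (Fin t → Fin (k + 1)) → X),
      ∃ (h : Hd k t) (z : X), ∀ b, z ∈ CS.hull (x '' ↑(selComb k t h b)) := by
  intro t
  induction t with
  | zero =>
    intro x
    refine ⟨fun n => n.1.elim0, x finZeroElim, fun b => ?_⟩
    apply subset_hull CS
    refine ⟨finZeroElim, ?_, rfl⟩
    simp [selComb]
  | succ t ih =>
    intro x
    -- build each subtree
    have hsub : ∀ i : Fin (k + 1), ∃ (h : Hd k t) (z : X),
        ∀ b, z ∈ CS.hull ((fun v => x (Fin.cons i v)) '' ↑(selComb k t h b)) :=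
      fun i => ih (fun v => x (Fin.cons i v))
    choose hs zs hzs using hsub
    rcases combine CS hCS zs with ⟨s, w, hwF, hwT⟩
    refine ⟨glH k t s hs, w, fun b => ?_⟩
    -- the selector of the combined tree
    have hmem : ∀ i ∈ sideOf k s (b 0),
        zs i ∈ CS.hull (x '' ↑(selComb k (t + 1) (glH k t s hs) b)) := by
      intro i hi
      have hsubi : ((fun v => x (Fin.cons i v)) '' ↑(selComb k t (hs i) (fun j => b j.succ)))
          ⊆ x '' ↑(selComb k (t + 1) (glH k t s hs) b) := by
        rintro v ⟨g, hg, rfl⟩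
        refine ⟨Fin.cons i g, ?_, rfl⟩
        apply Finset.mem_coe.2
        rw [mem_selComb_succ]
        constructor
        · rw [Fin.cons_zero, glH_root]
          exact hi
        · rw [Fin.cons_zero, Fin.tail_cons, resH_glH]
          exact hg
      exact hull_mono CS hsubi (hzs i (fun j => b j.succ))
    have hside : w ∈ CS.hull (zs '' ↑(sideOf k s (b 0))) := by
      cases hb : b 0
      · simpa [sideOf] using hwF
      · simpa [sideOf] using hwT
    refine hull_le_hull CS ?_ hside
    rintro v ⟨i, hi, rfl⟩
    exact hmem i (Finset.mem_coe.1 hi)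

end CHAux

namespace CHAux

variable {X : Type*} (CS : ConvexitySpace X)

section Root

variable (k t₁ t₂ : ℕ)

/-- Leaf addresses of the full scheme: one small subtree of depth `t₁` and `k` big
subtrees of depth `t₂`. -/
abbrev Addr := (Fin t₁ → Fin (k + 1)) ⊕ (Fin k × (Fin t₂ → Fin (k + 1)))

variable {k t₁ t₂}

/-- Extend a bit-vector of length `t₁` to length `t₂` by `false`s. -/
def extB (ht : t₁ ≤ t₂) (β : Fin t₁ → Bool) : Fin t₂ → Bool :=
  fun i => if h : (i : ℕ) < t₁ then β ⟨i, h⟩ else false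

theorem extB_injective (ht : t₁ ≤ t₂) : Function.Injective (extB ht) := by
  intro β β' h
  funext j
  have := congrFun h ⟨(j : ℕ), lt_of_lt_of_le j.isLt ht⟩
  simpa [extB, j.isLt] using this

/-- The selector sets of the assembled scheme, for indices coming from the `F` side. -/
def rootSelF (s : Rk k) (hB : Fin k → Hd k t₂) (β : Fin t₂ → Bool) : Finset (Addr k t₁ t₂) :=
  s.1.biUnion (fun i => (selComb k t₂ (hB i) β).image (fun v => Sum.inr (i, v)))

/-- The selector sets of the assembled scheme, for indices coming from the `T` side. -/
def rootSelT (ht : t₁ ≤ t₂) (s : Rk k) (hS : Hd k t₁) (hB : Fin k → Hd k t₂)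
    (β' : Fin t₁ → Bool) : Finset (Addr k t₁ t₂) :=
  (selComb k t₁ hS β').image Sum.inl ∪
    (s.1ᶜ).biUnion (fun j => (selComb k t₂ (hB j) (extB ht β')).image (fun v => Sum.inr (j, v)))

def rootSel (ht : t₁ ≤ t₂) (emb2 : Fin k ↪ ((Fin t₂ → Bool) ⊕ (Fin t₁ → Bool)))
    (ρ : Rk k × Hd k t₁ × (Fin k → Hd k t₂)) (l : Fin k) : Finset (Addr k t₁ t₂) :=
  match emb2 l with
  | Sum.inl β => rootSelF ρ.1 ρ.2.2 β
  | Sum.inr β' => rootSelT ht ρ.1 ρ.2.1 ρ.2.2 β'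

theorem mem_rootSelF {s : Rk k} {hB : Fin k → Hd k t₂} {β : Fin t₂ → Bool}
    {a : Addr k t₁ t₂} (ha : a ∈ rootSelF s hB β) :
    ∃ i v, a = Sum.inr (i, v) ∧ i ∈ s.1 ∧ v ∈ selComb k t₂ (hB i) β := by
  rcases Finset.mem_biUnion.1 ha with ⟨i, hi, ha'⟩
  rcases Finset.mem_image.1 ha' with ⟨v, hv, rfl⟩
  exact ⟨i, v, rfl, hi, hv⟩

theorem mem_rootSelT {ht : t₁ ≤ t₂} {s : Rk k} {hS : Hd k t₁} {hB : Fin k → Hd k t₂}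
    {β' : Fin t₁ → Bool} {a : Addr k t₁ t₂} (ha : a ∈ rootSelT ht s hS hB β') :
    (∃ v, a = Sum.inl v ∧ v ∈ selComb k t₁ hS β') ∨
      (∃ j v, a = Sum.inr (j, v) ∧ j ∉ s.1 ∧ v ∈ selComb k t₂ (hB j) (extB ht β')) := by
  rcases Finset.mem_union.1 ha with h | h
  · rcases Finset.mem_image.1 h with ⟨v, hv, rfl⟩
    exact Or.inl ⟨v, rfl, hv⟩
  · rcases Finset.mem_biUnion.1 h with ⟨j, hj, h'⟩
    rcases Finset.mem_image.1 h' with ⟨v, hv, rfl⟩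
    exact Or.inr ⟨j, v, rfl, Finset.mem_compl.1 hj, hv⟩

theorem rootSel_disjoint (ht : t₁ ≤ t₂) (emb2 : Fin k ↪ ((Fin t₂ → Bool) ⊕ (Fin t₁ → Bool)))
    (ρ : Rk k × Hd k t₁ × (Fin k → Hd k t₂)) {l l' : Fin k} (hll : l ≠ l')
    {a : Addr k t₁ t₂} (h1 : a ∈ rootSel ht emb2 ρ l) (h2 : a ∈ rootSel ht emb2 ρ l') :
    False := by
  have hemb : emb2 l ≠ emb2 l' := fun h => hll (emb2.injective h)
  rcases ρ with ⟨s, hS, hB⟩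
  unfold rootSel at h1 h2
  rcases hel : emb2 l with β | β' <;> rcases hel' : emb2 l' with γ | γ' <;>
    rw [hel] at h1 hemb <;> rw [hel'] at h2 hemb
  · -- both F side
    have hβγ : β ≠ γ := fun h => hemb (by rw [h])
    rcases mem_rootSelF h1 with ⟨i, v, rfl, hi, hv⟩
    rcases mem_rootSelF h2 with ⟨i', v', heq, hi', hv'⟩
    have hi2 : i = i' := by
      have := (Sum.inr.inj heq)
      exact (Prod.mk.injEq _ _ _ _ ▸ this).1
    have hv2 : v = v' := by
      have := (Sum.inr.inj heq)
      exact (Prod.mk.injEq _ _ _ _ ▸ this).2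
    subst hi2; subst hv2
    exact selComb_disjoint k t₂ (hB i) β γ hβγ v hv hv'
  · -- F side vs T side
    rcases mem_rootSelF h1 with ⟨i, v, rfl, hi, hv⟩
    rcases mem_rootSelT h2 with ⟨v', heq, _⟩ | ⟨j, v', heq, hj, _⟩
    · exact absurd heq (by simp)
    · have : i = j := by
        have := Sum.inr.inj heq
        exact (Prod.mk.injEq _ _ _ _ ▸ this).1
      exact hj (this ▸ hi)
  · -- T side vs F side
    rcases mem_rootSelF h2 with ⟨i, v, heq2, hi, hv⟩
    rcases mem_rootSelT h1 with ⟨v', heq, _⟩ | ⟨j, v', heq, hj, _⟩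
    · rw [heq] at heq2; exact absurd heq2 (by simp)
    · rw [heq] at heq2
      have : j = i := by
        have := Sum.inr.inj heq2
        exact (Prod.mk.injEq _ _ _ _ ▸ this).1
      exact hj (this ▸ hi)
  · -- both T side
    have hβγ : β' ≠ γ' := fun h => hemb (by rw [h])
    rcases mem_rootSelT h1 with ⟨v, heq, hv⟩ | ⟨j, v, heq, hj, hv⟩ <;>
      rcases mem_rootSelT h2 with ⟨v2, heq2, hv2⟩ | ⟨j2, v2, heq2, hj2, hv2⟩
    · rw [heq] at heq2
      have : v = v2 := Sum.inl.inj heq2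
      subst this
      exact selComb_disjoint k t₁ hS β' γ' hβγ v hv hv2
    · rw [heq] at heq2; exact absurd heq2 (by simp)
    · rw [heq] at heq2; exact absurd heq2 (by simp)
    · rw [heq] at heq2
      have hjj : j = j2 := by
        have := Sum.inr.inj heq2
        exact (Prod.mk.injEq _ _ _ _ ▸ this).1
      have hvv : v = v2 := by
        have := Sum.inr.inj heq2
        exact (Prod.mk.injEq _ _ _ _ ▸ this).2
      subst hjj; subst hvv
      have hext : extB ht β' ≠ extB ht γ' := fun h => hβγ (extB_injective ht h)
      exact selComb_disjoint k t₂ (hB j) _ _ hext v hv hv2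

end Root

/-- The core argument: a colorful family of convex `k`-tuples, each with empty
intersection, where the number of colors is at least the number of histories,
leads to a contradiction. -/
theorem core (hX : Nonempty X) {k : ℕ} (hk : 2 ≤ k) (hCS : CS.RadonLE (k + 1))
    (t₁ t₂ : ℕ) (ht : t₁ ≤ t₂) (hq : k ≤ 2 ^ t₂ + 2 ^ t₁) (m : ℕ)
    (hm : Fintype.card (Rk k × Hd k t₁ × (Fin k → Hd k t₂)) ≤ m)
    (T : Fin m → Fin k → Set X) (hT : ∀ i l, T i l ∈ CS.sets)
    (hsel : ∀ φ : Fin m → Fin k, (⋂ i, T i (φ i)).Nonempty)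
    (hemp : ∀ i, (⋂ l, T i l) = ∅) : False := by
  classical
  have hk0 : 0 < k := by omega
  -- embeddings
  obtain ⟨emb1⟩ : Nonempty ((Rk k × Hd k t₁ × (Fin k → Hd k t₂)) ↪ Fin m) := by
    apply Function.Embedding.nonempty_of_card_le
    simpa using hm
  obtain ⟨emb2⟩ : Nonempty (Fin k ↪ ((Fin t₂ → Bool) ⊕ (Fin t₁ → Bool))) := by
    apply Function.Embedding.nonempty_of_card_le
    simp only [Fintype.card_sum, Fintype.card_fin]
    have h1 : Fintype.card (Fin t₂ → Bool) = 2 ^ t₂ := by simp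
    have h2 : Fintype.card (Fin t₁ → Bool) = 2 ^ t₁ := by simp
    rw [h1, h2]
    exact hq
  -- labels
  set lab : (Rk k × Hd k t₁ × (Fin k → Hd k t₂)) → Addr k t₁ t₂ → Fin k := fun ρ a =>
    if h : ∃ l, a ∈ rootSel ht emb2 ρ l then h.choose else ⟨0, hk0⟩ with hlab
  have lab_eq : ∀ ρ a l, a ∈ rootSel ht emb2 ρ l → lab ρ a = l := by
    intro ρ a l hal
    rw [hlab]
    have hex : ∃ l', a ∈ rootSel ht emb2 ρ l' := ⟨l, hal⟩
    simp only [dif_pos hex]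
    by_contra hne
    exact rootSel_disjoint ht emb2 ρ hne hex.choose_spec hal
  -- the color functions
  set φ : Addr k t₁ t₂ → Fin m → Fin k := fun a i =>
    if h : ∃ ρ, emb1 ρ = i then lab h.choose a else ⟨0, hk0⟩ with hφ
  have hφ_eq : ∀ ρ a, φ a (emb1 ρ) = lab ρ a := by
    intro ρ a
    rw [hφ]
    have hex : ∃ ρ', emb1 ρ' = emb1 ρ := ⟨ρ, rfl⟩
    simp only [dif_pos hex]
    have : hex.choose = ρ := emb1.injective hex.choose_spec
    rw [this]
  -- the points
  have hx : ∀ a : Addr k t₁ t₂, ∃ p : X, ∀ i, p ∈ T i (φ a i) := by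
    intro a
    rcases hsel (φ a) with ⟨p, hp⟩
    exact ⟨p, fun i => Set.mem_iInter.1 hp i⟩
  choose x hxp using hx
  -- build the subtrees
  rcases build CS hCS t₁ (fun v => x (Sum.inl v)) with ⟨hS, zS, hzS⟩
  have hbig : ∀ i : Fin k, ∃ (h : Hd k t₂) (z : X),
      ∀ b, z ∈ CS.hull ((fun v => x (Sum.inr (i, v))) '' ↑(selComb k t₂ h b)) :=
    fun i => build CS hCS t₂ (fun v => x (Sum.inr (i, v)))
  choose hB zB hzB using hbig
  -- combine at the root
  rcases combine CS hCS (Fin.cons zS zB) with ⟨s, w, hwF, hwT⟩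
  set ρstar := (s, hS, hB) with hρstar
  set istar := emb1 ρstar with histar
  -- the witness is in the hull of every final selector
  have hwl : ∀ l : Fin k, w ∈ CS.hull (x '' ↑(rootSel ht emb2 ρstar l)) := by
    intro l
    rcases hel : emb2 l with β | β'
    · -- F side
      have hsel_eq : rootSel ht emb2 ρstar l = rootSelF s hB β := by
        unfold rootSel
        rw [hel]
      rw [hsel_eq]
      have hmem : ∀ i ∈ sideF k s, (Fin.cons zS zB : Fin (k+1) → X) i ∈ CS.hull (x '' ↑(rootSelF s hB β : Finset (Addr k t₁ t₂))) := by
        intro i hi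
        rcases Finset.mem_map.1 hi with ⟨a, ha, rfl⟩
        simp only [Function.Embedding.coeFn_mk, Fin.cons_succ]
        refine hull_mono CS ?_ (hzB a β)
        rintro v ⟨g, hg, rfl⟩
        refine ⟨Sum.inr (a, g), ?_, rfl⟩
        apply Finset.mem_coe.2
        apply Finset.mem_biUnion.2
        exact ⟨a, ha, Finset.mem_image.2 ⟨g, hg, rfl⟩⟩
      refine hull_le_hull CS ?_ hwF
      rintro v ⟨i, hi, rfl⟩
      exact hmem i (Finset.mem_coe.1 hi)
    · -- T side
      have hsel_eq : rootSel ht emb2 ρstar l = rootSelT ht s hS hB β' := by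
        unfold rootSel
        rw [hel]
      rw [hsel_eq]
      have hmem : ∀ i ∈ (sideF k s)ᶜ,
          (Fin.cons zS zB : Fin (k+1) → X) i ∈ CS.hull (x '' ↑(rootSelT ht s hS hB β')) := by
        intro i hi
        rcases Fin.eq_zero_or_eq_succ i with rfl | ⟨a, rfl⟩
        · simp only [Fin.cons_zero]
          refine hull_mono CS ?_ (hzS β')
          rintro v ⟨g, hg, rfl⟩
          refine ⟨Sum.inl g, ?_, rfl⟩
          apply Finset.mem_coe.2
          apply Finset.mem_union_left
          exact Finset.mem_image.2 ⟨g, hg, rfl⟩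
        · simp only [Fin.cons_succ]
          have ha : a ∉ s.1 := by
            intro hmem'
            exact (Finset.mem_compl.1 hi) (Finset.mem_map.2 ⟨a, hmem', rfl⟩)
          refine hull_mono CS ?_ (hzB a (extB ht β'))
          rintro v ⟨g, hg, rfl⟩
          refine ⟨Sum.inr (a, g), ?_, rfl⟩
          apply Finset.mem_coe.2
          apply Finset.mem_union_right
          apply Finset.mem_biUnion.2
          exact ⟨a, Finset.mem_compl.2 ha, Finset.mem_image.2 ⟨g, hg, rfl⟩⟩
      refine hull_le_hull CS ?_ hwT
      rintro v ⟨i, hi, rfl⟩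
      exact hmem i (Finset.mem_coe.1 hi)
  -- conclude : w lies in all the sets T istar l
  have hwT' : ∀ l : Fin k, w ∈ T istar l := by
    intro l
    refine hull_min CS (hT istar l) ?_ (hwl l)
    rintro v ⟨a, ha, rfl⟩
    have hlab_a : lab ρstar a = l := lab_eq ρstar a l (Finset.mem_coe.1 ha)
    have := hxp a istar
    rw [histar, hφ_eq ρstar a, hlab_a] at this
    exact this
  have : w ∈ ⋂ l, T istar l := Set.mem_iInter.2 hwT'
  rw [hemp istar] at this
  exact this

end CHAux

namespace CHAux

theorem stirling2_eq_zero : ∀ n k : ℕ, n < k → stirling2 n k = 0 := by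
  intro n
  induction n with
  | zero =>
    intro k hk
    match k, hk with
    | (k' + 1), _ => rfl
  | succ n ih =>
    intro k hk
    match k, hk with
    | (k' + 1), hk =>
      show (k' + 1) * stirling2 n (k' + 1) + stirling2 n k' = 0
      rw [ih (k' + 1) (by omega), ih k' (by omega)]
      simp

theorem stirling2_diag : ∀ n : ℕ, stirling2 n n = 1 := by
  intro n
  induction n with
  | zero => rfl
  | succ n ih =>
    show (n + 1) * stirling2 n (n + 1) + stirling2 n n = 1
    rw [stirling2_eq_zero n (n + 1) (by omega), ih]
    simp

theorem le_stirling2 (k : ℕ) (hk : 1 ≤ k) : ∀ n, k ≤ n → k ^ (n - k) ≤ stirling2 n k := by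
  intro n
  induction n with
  | zero => intro h; interval_cases k
  | succ n ih =>
    intro hkn
    rcases eq_or_lt_of_le hkn with heq | hlt
    · rw [← heq]
      simp [stirling2_diag]
    · have hkn' : k ≤ n := by omega
      have hstep : k * stirling2 n k ≤ stirling2 (n + 1) k := by
        match k, hk with
        | (k' + 1), _ =>
          show (k' + 1) * stirling2 n (k' + 1) ≤ (k' + 1) * stirling2 n (k' + 1) + stirling2 n k'
          omega
      calc k ^ (n + 1 - k) = k * k ^ (n - k) := by
            rw [← pow_succ']
            congr 1
            omega
        _ ≤ k * stirling2 n k := Nat.mul_le_mul_left k (ih hkn')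
        _ ≤ stirling2 (n + 1) k := hstep

theorem card_Rk (k : ℕ) : Fintype.card (Rk k) = 2 ^ k - 1 := by
  classical
  rw [Fintype.card_subtype]
  have h : Finset.univ.filter (fun S : Finset (Fin k) => S.Nonempty) = Finset.univ.erase ∅ := by
    ext S
    simp [Finset.nonempty_iff_ne_empty]
  rw [h, Finset.card_erase_of_mem (Finset.mem_univ _), Finset.card_univ, Fintype.card_finset,
    Fintype.card_fin]

theorem card_Nd_geom (k : ℕ) : ∀ t : ℕ, k * Fintype.card (Nd k t) + 1 = (k + 1) ^ t := by
  have hcard : ∀ t : ℕ, Fintype.card (Nd k t) = ∑ j : Fin t, (k + 1) ^ (j : ℕ) := by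
    intro t
    unfold Nd
    rw [Fintype.card_sigma]
    congr 1
    funext j
    simp
  intro t
  induction t with
  | zero => simp [hcard]
  | succ t ih =>
    rw [hcard] at ih ⊢
    rw [Fin.sum_univ_castSucc]
    simp only [Fin.coe_castSucc, Fin.val_last]
    calc k * ((∑ j : Fin t, (k + 1) ^ (j : ℕ)) + (k + 1) ^ t) + 1
        = (k * (∑ j : Fin t, (k + 1) ^ (j : ℕ)) + 1) + k * (k + 1) ^ t := by ring
      _ = (k + 1) ^ t + k * (k + 1) ^ t := by rw [ih]
      _ = (k + 1) ^ (t + 1) := by ring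

theorem card_HT (k t₁ t₂ : ℕ) :
    Fintype.card (Rk k × Hd k t₁ × (Fin k → Hd k t₂)) =
      Fintype.card (Rk k) ^ (1 + Fintype.card (Nd k t₁) + k * Fintype.card (Nd k t₂)) := by
  classical
  rw [Fintype.card_prod, Fintype.card_prod]
  unfold Hd
  rw [Fintype.card_fun, Fintype.card_fun, Fintype.card_fun]
  rw [Fintype.card_fin]
  ring

theorem two_mul_le_pow : ∀ c : ℕ, 4 ≤ c → 2 * c ≤ 2 ^ (c - 1) := by
  intro c hc
  induction c, hc using Nat.le_induction with
  | base => norm_num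
  | succ c hc ih =>
    have h2 : (2 : ℕ) ≤ 2 ^ (c - 1) := by
      calc (2 : ℕ) = 2 ^ 1 := rfl
        _ ≤ 2 ^ (c - 1) := Nat.pow_le_pow_right (by norm_num) (by omega)
    have hpow : 2 ^ (c + 1 - 1) = 2 * 2 ^ (c - 1) := by
      rw [Nat.add_sub_cancel]
      conv_lhs => rw [show c = (c - 1) + 1 by omega]
      ring
    omega

theorem binom_aux (k : ℕ) : ∀ c : ℕ, 2 * (c + 1) ≤ k →
    (k + 1) ^ (c + 1) ≤ k ^ (c + 1) + 2 * (c + 1) * k ^ c := by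
  intro c
  induction c with
  | zero =>
    intro _
    simp only [zero_add, pow_one, pow_zero, mul_one]
    omega
  | succ c ih =>
    intro h
    have ih' := ih (by omega)
    have hkey : 2 * (c + 1) * k ^ c ≤ k ^ (c + 1) := by
      calc 2 * (c + 1) * k ^ c ≤ k * k ^ c := Nat.mul_le_mul_right _ (by omega)
        _ = k ^ (c + 1) := by ring
    calc (k + 1) ^ (c + 2) = (k + 1) ^ (c + 1) * (k + 1) := by ring
      _ ≤ (k ^ (c + 1) + 2 * (c + 1) * k ^ c) * (k + 1) := Nat.mul_le_mul_right _ ih'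
      _ = k ^ (c + 2) + 2 * (c + 1) * k ^ (c + 1) + (k ^ (c + 1) + 2 * (c + 1) * k ^ c) := by ring
      _ ≤ k ^ (c + 2) + 2 * (c + 1) * k ^ (c + 1) + (k ^ (c + 1) + k ^ (c + 1)) := by
          have := hkey; omega
      _ = k ^ (c + 2) + 2 * (c + 2) * k ^ (c + 1) := by ring

theorem clog2_eq (n m : ℕ) (hm : 1 ≤ m) (h1 : n ≤ 2 ^ m) (h2 : 2 ^ (m - 1) < n) :
    Nat.clog 2 n = m := by
  have hle : Nat.clog 2 n ≤ m := (Nat.clog_le_iff_le_pow (by norm_num)).2 h1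
  have hlt : m - 1 < Nat.clog 2 n := (Nat.lt_clog_iff_pow_lt (by norm_num)).2 h2
  omega

/-- The key arithmetic inequality for `k ≥ 4`. -/
theorem arith_main (k : ℕ) (hk : 4 ≤ k) :
    (k + 1) ^ (Nat.clog 2 k) + 2 * k ≤ 2 * k ^ (Nat.clog 2 (k + 1)) + 1 := by
  obtain ⟨c, hc⟩ : ∃ c, Nat.clog 2 k = c := ⟨_, rfl⟩
  obtain ⟨d, hd⟩ : ∃ d, Nat.clog 2 (k + 1) = d := ⟨_, rfl⟩
  rw [hc, hd]
  have hcd : c ≤ d := by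
    rw [← hc, ← hd]
    exact Nat.clog_mono_right _ (by omega)
  have hkc : k ≤ 2 ^ c := by
    rw [← hc]
    exact Nat.le_pow_clog (by norm_num) _
  have hklow : 2 ^ (c - 1) < k := by
    have := Nat.pow_pred_clog_lt_self (b := 2) (by norm_num) (x := k) (by omega)
    rwa [hc, Nat.pred_eq_sub_one] at this
  by_cases hpow : k + 1 ≤ 2 ^ c
  · -- then d = c
    have hdc : d = c := by
      have : d ≤ c := by
        rw [← hd]
        exact (Nat.clog_le_iff_le_pow (by norm_num)).2 hpow
      omega
    subst hdc
    have h5 : 5 ≤ k := by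
      by_contra hcon
      push_neg at hcon
      have hk4 : k = 4 := by omega
      subst hk4
      have hcle : d ≤ 2 := by
        by_contra hc3
        push_neg at hc3
        have : (2:ℕ) ^ 2 ≤ 2 ^ (d - 1) := Nat.pow_le_pow_right (by norm_num) (by omega)
        omega
      have : (2:ℕ) ^ d ≤ 2 ^ 2 := Nat.pow_le_pow_right (by norm_num) hcle
      omega
    rcases Nat.lt_or_ge k 8 with hk8 | hk8
    · -- k ∈ {5,6,7} : d = 3
      have hd3 : d = 3 := by
        have hup : d ≤ 3 := by
          by_contra hcc
          push_neg at hcc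
          have : (2:ℕ) ^ 3 ≤ 2 ^ (d - 1) := Nat.pow_le_pow_right (by norm_num) (by omega)
          omega
        have hlo : 3 ≤ d := by
          by_contra hcc
          push_neg at hcc
          have : (2:ℕ) ^ d ≤ 2 ^ 2 := Nat.pow_le_pow_right (by norm_num) (by omega)
          omega
        omega
      subst hd3
      nlinarith [h5, hk8, sq_nonneg k]
    · -- k ≥ 8 forces d ≥ 4
      have hc4 : 4 ≤ d := by
        by_contra hcon
        push_neg at hcon
        have : (2:ℕ) ^ d ≤ 2 ^ 3 := Nat.pow_le_pow_right (by norm_num) (by omega)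
        omega
      have h2c : 2 * d ≤ 2 ^ (d - 1) := two_mul_le_pow d hc4
      have h2ck : 2 * d < k := lt_of_le_of_lt h2c hklow
      obtain ⟨c', rfl⟩ : ∃ c', d = c' + 1 := ⟨d - 1, by omega⟩
      have hbin := binom_aux k c' (by omega)
      have hkey12 : 2 * (c' + 1) * k ^ c' + k ^ c' ≤ k ^ (c' + 1) := by
        have hmul : (2 * (c' + 1) + 1) * k ^ c' ≤ k * k ^ c' :=
          Nat.mul_le_mul_right _ (by omega)
        calc 2 * (c' + 1) * k ^ c' + k ^ c' = (2 * (c' + 1) + 1) * k ^ c' := by ring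
          _ ≤ k * k ^ c' := hmul
          _ = k ^ (c' + 1) := by ring
      have hkey3 : 2 * k ≤ k ^ c' := by
        calc 2 * k ≤ k * k := Nat.mul_le_mul_right _ (by omega)
          _ = k ^ 2 := by ring
          _ ≤ k ^ c' := Nat.pow_le_pow_right (by omega) (by omega)
      omega
  · -- k = 2^c exactly; d ≥ c + 1
    push_neg at hpow
    have hkeq : k = 2 ^ c := by omega
    have hdc : c + 1 ≤ d := by
      have := (Nat.lt_clog_iff_pow_lt (show (1:ℕ) < 2 by norm_num)).2 hpow
      omega
    have hc2 : 2 ≤ c := by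
      by_contra hcon
      push_neg at hcon
      have : (2:ℕ) ^ c ≤ 2 ^ 1 := Nat.pow_le_pow_right (by norm_num) (by omega)
      omega
    have h1 : (k + 1) ^ c ≤ k ^ (c + 1) := by
      calc (k + 1) ^ c ≤ (2 * k) ^ c := Nat.pow_le_pow_left (by omega) c
        _ = 2 ^ c * k ^ c := by rw [mul_pow]
        _ = k * k ^ c := by rw [← hkeq]
        _ = k ^ (c + 1) := by ring
    have h2 : k ^ (c + 1) ≤ k ^ d := Nat.pow_le_pow_right (by omega) hdc
    have h3 : 2 * k ≤ k ^ (c + 1) + 1 := by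
      calc 2 * k ≤ k * k := Nat.mul_le_mul_right _ (by omega)
        _ = k ^ 2 := by ring
        _ ≤ k ^ (c + 1) := Nat.pow_le_pow_right (by omega) (by omega)
        _ ≤ k ^ (c + 1) + 1 := by omega
    omega

end CHAux

/-- **Colorful Helly theorem for convexity spaces** (Lemma 4).
Let `r ≥ 3`, `k = r - 1`, `n = k ^ ⌈log₂ r⌉` and `m = S(n, k)` (a Stirling number of the
second kind). If `F₁, …, F_m` are finite families of convex sets in a convexity space with
Radon number at most `r` such that every colorful selection `S₁ ∈ F₁, …, S_m ∈ F_m` has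
`S₁ ∩ ⋯ ∩ S_m ≠ ∅`, then some family `F_i` has nonempty intersection. -/
theorem colorful_helly_convexity_spaces {X : Type*} (hX : Nonempty X)
    (r : ℕ) (hr : 3 ≤ r) (m : ℕ)
    (hm : m = stirling2 ((r - 1) ^ Nat.clog 2 r) (r - 1))
    (CS : ConvexitySpace X) (hCS : CS.RadonLE r)
    (F : Fin m → Finset (Set X)) (hF : ∀ i, ∀ S ∈ F i, S ∈ CS.sets)
    (hcolor : ∀ S : Fin m → Set X, (∀ i, S i ∈ F i) → (⋂ i, S i).Nonempty) :
    ∃ i, (⋂₀ ((F i : Finset (Set X)) : Set (Set X))).Nonempty := by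
  classical
  by_contra hcon
  push_neg at hcon
  have hemp : ∀ i, ⋂₀ ((F i : Finset (Set X)) : Set (Set X)) = ∅ := hcon
  obtain ⟨k, rfl⟩ : ∃ k, r = k + 1 := ⟨r - 1, by omega⟩
  have hk2 : 2 ≤ k := by omega
  have hm' : m = stirling2 (k ^ Nat.clog 2 (k + 1)) k := by simpa using hm
  have hK : ∀ i, ∃ K : Fin k → Set X, (∀ l, K l ∈ F i) ∧ (⋂ l, K l) = ∅ := fun i =>
    CHAux.helly CS hX k (by omega) hCS (F i) (hF i) (hemp i)
  choose K hK1 hK2 using hK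
  have hT : ∀ i l, K i l ∈ CS.sets := fun i l => hF i _ (hK1 i l)
  have hsel : ∀ φ : Fin m → Fin k, (⋂ i, K i (φ i)).Nonempty := fun φ =>
    hcolor (fun i => K i (φ i)) (fun i => hK1 i (φ i))
  rcases Nat.lt_or_ge k 4 with hk4 | hk4
  · interval_cases k
    · -- k = 2
      have hd : Nat.clog 2 3 = 2 := CHAux.clog2_eq 3 2 (by norm_num) (by norm_num) (by norm_num)
      refine CHAux.core CS hX (le_refl 2) hCS 0 0 (le_refl 0) (by norm_num) m ?_ K hT hsel hK2
      rw [hm', hd]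
      have hcard : Fintype.card (CHAux.Rk 2 × CHAux.Hd 2 0 × (Fin 2 → CHAux.Hd 2 0)) = 3 := by
        rw [CHAux.card_HT, CHAux.card_Rk]
        have h0 : Fintype.card (CHAux.Nd 2 0) = 0 := by
          have := CHAux.card_Nd_geom 2 0
          omega
        rw [h0]
        norm_num
      rw [hcard]
      show 3 ≤ stirling2 (2 ^ 2) 2
      decide
    · -- k = 3
      have hd : Nat.clog 2 4 = 2 := CHAux.clog2_eq 4 2 (by norm_num) (by norm_num) (by norm_num)
      refine CHAux.core CS hX (by norm_num) hCS 0 1 (by norm_num) (by norm_num) m ?_ K hT hsel hK2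
      rw [hm', hd]
      have h0 : Fintype.card (CHAux.Nd 3 0) = 0 := by
        have := CHAux.card_Nd_geom 3 0
        omega
      have h1 : Fintype.card (CHAux.Nd 3 1) = 1 := by
        have := CHAux.card_Nd_geom 3 1
        omega
      have hcard : Fintype.card (CHAux.Rk 3 × CHAux.Hd 3 0 × (Fin 3 → CHAux.Hd 3 1)) = 2401 := by
        rw [CHAux.card_HT, CHAux.card_Rk, h0, h1]
        norm_num
      rw [hcard]
      show 2401 ≤ stirling2 (3 ^ 2) 3
      decide
  · -- k ≥ 4
    obtain ⟨c, hc⟩ : ∃ c, Nat.clog 2 k = c := ⟨_, rfl⟩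
    obtain ⟨d, hd⟩ : ∃ d, Nat.clog 2 (k + 1) = d := ⟨_, rfl⟩
    have hkc : k ≤ 2 ^ c := by
      rw [← hc]
      exact Nat.le_pow_clog (by norm_num) _
    have hc1 : 1 ≤ c := by
      by_contra hcon
      push_neg at hcon
      have hc0 : c = 0 := by omega
      rw [hc0] at hkc
      norm_num at hkc
      omega
    have hd1 : 1 ≤ d := by
      rw [← hd]
      exact Nat.clog_pos (by norm_num) (by omega)
    have hpow2 : (2:ℕ) ^ c = 2 ^ (c - 1) * 2 := by
      conv_lhs => rw [show c = (c - 1) + 1 by omega]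
      rw [pow_succ]
    have hq : k ≤ 2 ^ (c - 1) + 2 ^ (c - 1) := by
      calc k ≤ 2 ^ c := hkc
        _ = 2 ^ (c - 1) * 2 := hpow2
        _ = 2 ^ (c - 1) + 2 ^ (c - 1) := by ring
    refine CHAux.core CS hX (by omega) hCS (c - 1) (c - 1) (le_refl _) hq m ?_ K hT hsel hK2
    -- counting
    obtain ⟨ν, hν⟩ : ∃ ν, Fintype.card (CHAux.Nd k (c - 1)) = ν := ⟨_, rfl⟩
    have hgeom : k * ν + 1 = (k + 1) ^ (c - 1) := by
      rw [← hν]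
      exact CHAux.card_Nd_geom k (c - 1)
    have hcard := CHAux.card_HT k (c - 1) (c - 1)
    rw [CHAux.card_Rk, hν] at hcard
    have hle1 : Fintype.card (CHAux.Rk k × CHAux.Hd k (c - 1) × (Fin k → CHAux.Hd k (c - 1)))
        ≤ (2 ^ k) ^ (1 + ν + k * ν) := by
      rw [hcard]
      exact Nat.pow_le_pow_left (Nat.sub_le _ _) _
    obtain ⟨A, hA⟩ : ∃ A, k * (1 + ν + k * ν) = A := ⟨_, rfl⟩
    have hexp : A + 1 = (k + 1) ^ c := by
      have h1 : k * (1 + ν + k * ν) + 1 = (k + 1) * (k * ν + 1) := by ring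
      rw [← hA, h1, hgeom, ← pow_succ']
      congr 1
      omega
    have harith := CHAux.arith_main k hk4
    rw [hc, hd] at harith
    have hkd : k ≤ k ^ d := by
      calc k = k ^ 1 := (pow_one k).symm
        _ ≤ k ^ d := Nat.pow_le_pow_right (by omega) hd1
    have hexp2 : A ≤ 2 * (k ^ d - k) := by omega
    calc Fintype.card (CHAux.Rk k × CHAux.Hd k (c - 1) × (Fin k → CHAux.Hd k (c - 1)))
        ≤ (2 ^ k) ^ (1 + ν + k * ν) := hle1
      _ = 2 ^ A := by rw [← pow_mul, hA]
      _ ≤ 2 ^ (2 * (k ^ d - k)) := Nat.pow_le_pow_right (by norm_num) hexp2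
      _ = 4 ^ (k ^ d - k) := by
          rw [show (4:ℕ) = 2 ^ 2 by norm_num, ← pow_mul]
      _ ≤ k ^ (k ^ d - k) := Nat.pow_le_pow_left (by omega) _
      _ ≤ stirling2 (k ^ d) k := CHAux.le_stirling2 k (by omega) _ hkd
      _ = m := by rw [hm', hd]
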